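/- For the planar rotation R_k(θ) on ℝ^{2n}, the number of pairs (I,J) of equal-size subsets of {1,...,2n} with nonzero minor det(R_k(θ)_{I,J}) is at most (3/2)·2^{2n}: exactly 2^{2n-1} pairs give minor 1, 2^{2n-1} give minor cos θ, and 2^{2n-2} + 2^{2n-2} give minor ±sin θ (counting with the generic θ where cos θ, sin θ ≠ 0). -/

import Mathlib

open Matrix Real

/-- The planar (Givens) rotation of `ℝⁿ` in the (0-indexed) coordinate plane
`(k, k+1)`, equal to the identity elsewhere. -/
noncomputable def givensRot (n : ℕ) (k : ℕ) (θ : ℝ) : Matrix (Fin n) (Fin n) ℝ :=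
  Matrix.of fun i j =>
    if (i : ℕ) = k ∧ (j : ℕ) = k then Real.cos θ
    else if (i : ℕ) = k ∧ (j : ℕ) = k + 1 then Real.sin θ
    else if (i : ℕ) = k + 1 ∧ (j : ℕ) = k then -Real.sin θ
    else if (i : ℕ) = k + 1 ∧ (j : ℕ) = k + 1 then Real.cos θ
    else if i = j then 1 else 0

/-- The minor of a matrix with rows `I` and columns `J` (zero if `|I| ≠ |J|`). -/
noncomputable def minor {m : ℕ} (M : Matrix (Fin m) (Fin m) ℝ)
    (p : Finset (Fin m) × Finset (Fin m)) : ℝ :=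
  if h : p.1.card = p.2.card then
    (M.submatrix (p.1.orderEmbOfFin rfl) (p.2.orderEmbOfFin h.symm)).det
  else 0

set_option maxHeartbeats 1600000

namespace GivensAux


lemma univ_map_oEF {m : ℕ} (s : Finset (Fin m)) {l : ℕ} (h : s.card = l) :
    Finset.univ.map (s.orderEmbOfFin h).toEmbedding = s := by
  ext x
  simp only [Finset.mem_map, Finset.mem_univ, true_and, RelEmbedding.coe_toEmbedding]
  constructor
  · rintro ⟨i, rfl⟩; exact s.orderEmbOfFin_mem h i
  · intro hx
    have : x ∈ Set.range (s.orderEmbOfFin h) := by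
      rw [Finset.range_orderEmbOfFin]; exact hx
    exact this

lemma sum_oEF {m : ℕ} (s : Finset (Fin m)) {l : ℕ} (h : s.card = l) (F : Fin m → ℝ) :
    ∑ i : Fin l, F (s.orderEmbOfFin h i) = ∑ x ∈ s, F x := by
  conv_rhs => rw [← univ_map_oEF s h]
  rw [Finset.sum_map]; rfl

lemma prod_oEF {m : ℕ} (s : Finset (Fin m)) {l : ℕ} (h : s.card = l) (F : Fin m → ℝ) :
    ∏ i : Fin l, F (s.orderEmbOfFin h i) = ∏ x ∈ s, F x := by
  conv_rhs => rw [← univ_map_oEF s h]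
  rw [Finset.prod_map]; rfl

lemma minor_eq_det {m : ℕ} (M : Matrix (Fin m) (Fin m) ℝ) {I J : Finset (Fin m)}
    (h : I.card = J.card) :
    minor M (I, J) = (M.submatrix (I.orderEmbOfFin rfl) (J.orderEmbOfFin h.symm)).det := by
  unfold minor
  rw [dif_pos h]

noncomputable def Amat (m k : ℕ) : Matrix (Fin m) (Fin 2) ℝ := fun i t =>
  if (t : ℕ) = 0 then (if (i : ℕ) = k then 1 else 0)
  else (if (i : ℕ) = k + 1 then 1 else 0)

noncomputable def Bmat (m k : ℕ) (θ : ℝ) : Matrix (Fin 2) (Fin m) ℝ := fun t j =>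
  if (j : ℕ) = k then (if (t : ℕ) = 0 then Real.cos θ - 1 else -Real.sin θ)
  else if (j : ℕ) = k + 1 then (if (t : ℕ) = 0 then Real.sin θ else Real.cos θ - 1)
  else 0

lemma givens_eq (m k : ℕ) (θ : ℝ) : givensRot m k θ = 1 + Amat m k * Bmat m k θ := by
  ext i j
  simp only [givensRot, Matrix.of_apply, Matrix.add_apply, Matrix.one_apply, Matrix.mul_apply,
    Fin.sum_univ_two, Amat, Bmat, Fin.val_zero, Fin.val_one]
  norm_num
  split_ifs <;> simp_all [Fin.ext_iff]

lemma minor_diag {m : ℕ} (k : ℕ) (θ : ℝ) (hk : k + 1 < m) (I : Finset (Fin m)) :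
    minor (givensRot m k θ) (I, I) =
      if (⟨k, by omega⟩ : Fin m) ∈ I then
        (if (⟨k + 1, hk⟩ : Fin m) ∈ I then 1 else Real.cos θ)
      else (if (⟨k + 1, hk⟩ : Fin m) ∈ I then Real.cos θ else 1) := by
  set a : Fin m := ⟨k, by omega⟩ with ha
  set b : Fin m := ⟨k + 1, hk⟩ with hb
  rw [minor_eq_det _ rfl]
  have key : (givensRot m k θ).submatrix (I.orderEmbOfFin rfl)
        (I.orderEmbOfFin (rfl : I.card = I.card).symm) =
      1 + (Amat m k).submatrix (I.orderEmbOfFin rfl) id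
        * (Bmat m k θ).submatrix id (I.orderEmbOfFin rfl) := by
    rw [givens_eq m k θ]
    ext i j
    simp only [Matrix.submatrix_apply, Matrix.add_apply, Matrix.one_apply, Matrix.mul_apply,
      id_eq, EmbeddingLike.apply_eq_iff_eq, Finset.orderEmbOfFin_eq_orderEmbOfFin_iff,
      Fin.val_eq_val]
  rw [key, Matrix.det_one_add_mul_comm, Matrix.det_fin_two]
  have hsum : ∀ (t u : Fin 2),
      ((Bmat m k θ).submatrix id (I.orderEmbOfFin rfl)
        * (Amat m k).submatrix (I.orderEmbOfFin rfl) id) t u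
      = ∑ x ∈ I, Bmat m k θ t x * Amat m k x u := by
    intro t u
    simp only [Matrix.mul_apply, Matrix.submatrix_apply, id_eq]
    exact sum_oEF I rfl (fun x => Bmat m k θ t x * Amat m k x u)
  have e00 : ∀ x : Fin m, Bmat m k θ 0 x * Amat m k x 0
      = if x = a then Real.cos θ - 1 else 0 := by
    intro x; simp only [Amat, Bmat, ha, Fin.ext_iff]; norm_num
    split_ifs <;> simp_all <;> ring
  have e01 : ∀ x : Fin m, Bmat m k θ 0 x * Amat m k x 1
      = if x = b then Real.sin θ else 0 := by
    intro x; simp only [Amat, Bmat, hb, Fin.ext_iff]; norm_num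
    split_ifs <;> simp_all <;> ring
  have e10 : ∀ x : Fin m, Bmat m k θ 1 x * Amat m k x 0
      = if x = a then -Real.sin θ else 0 := by
    intro x; simp only [Amat, Bmat, ha, Fin.ext_iff]; norm_num
    split_ifs <;> simp_all <;> ring
  have e11 : ∀ x : Fin m, Bmat m k θ 1 x * Amat m k x 1
      = if x = b then Real.cos θ - 1 else 0 := by
    intro x; simp only [Amat, Bmat, hb, Fin.ext_iff]; norm_num
    split_ifs <;> simp_all <;> ring
  simp only [Matrix.add_apply, Matrix.one_apply, hsum]
  rw [Finset.sum_congr rfl (fun x _ => e00 x), Finset.sum_congr rfl (fun x _ => e01 x),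
    Finset.sum_congr rfl (fun x _ => e10 x), Finset.sum_congr rfl (fun x _ => e11 x),
    Finset.sum_ite_eq' I a, Finset.sum_ite_eq' I b, Finset.sum_ite_eq' I a,
    Finset.sum_ite_eq' I b]
  norm_num
  split_ifs <;> nlinarith [Real.sin_sq_add_cos_sq θ]

/-- General "swap" minor: rows `I` containing `a` not `b`, columns obtained by
replacing `a` with `b`; the minor equals the `(a,b)` entry of the matrix, provided
the matrix is "identity off `{a,b}` rows/cols" in the givensRot sense.  We prove it
directly for givensRot, parametrised so it covers both swap directions. -/
lemma minor_swap {m : ℕ} (k : ℕ) (θ : ℝ) (hk : k + 1 < m) {a b : Fin m}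
    (hab : a ≠ b)
    (hor : ((a : ℕ) = k ∧ (b : ℕ) = k + 1) ∨ ((a : ℕ) = k + 1 ∧ (b : ℕ) = k))
    (I : Finset (Fin m)) (ha : a ∈ I) (hb : b ∉ I) :
    minor (givensRot m k θ) (I, insert b (I.erase a)) =
      givensRot m k θ a b := by
  set J := insert b (I.erase a) with hJ
  have hbJ : b ∉ I.erase a := fun h => hb (Finset.mem_of_mem_erase h)
  have hcard : I.card = J.card := by
    rw [hJ, Finset.card_insert_of_notMem hbJ, Finset.card_erase_of_mem ha]
    have : 1 ≤ I.card := Finset.card_pos.mpr ⟨a, ha⟩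
    omega
  rw [minor_eq_det _ hcard]
  set f := I.orderEmbOfFin rfl with hf
  have hfI : ∀ i, f i ∈ I := fun i => I.orderEmbOfFin_mem rfl i
  have hfb : ∀ i, f i ≠ b := fun i h => hb (h ▸ hfI i)
  have hmem : ∀ j : Fin I.card, (if f j = a then b else f j) ∈ J := by
    intro j
    split_ifs with h
    · exact Finset.mem_insert_self _ _
    · exact Finset.mem_insert_of_mem (Finset.mem_erase.mpr ⟨h, hfI j⟩)
  have hmono : StrictMono (fun j : Fin I.card => if f j = a then b else f j) := by
    intro i j hij
    have hlt : f i < f j := f.strictMono hij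
    have hji : f i ≠ f j := ne_of_lt hlt
    have hltv : (f i : ℕ) < (f j : ℕ) := hlt
    by_cases hi : f i = a
    · have hj : f j ≠ a := fun h => hji (hi.trans h.symm)
      simp only [if_pos hi, if_neg hj]
      have h1 : (a : ℕ) < (f j : ℕ) := by rw [← hi]; exact hltv
      have h2 : (f j : ℕ) ≠ (b : ℕ) := fun h => hfb j (Fin.ext h)
      have h3 : (f j : ℕ) ≠ (a : ℕ) := fun h => hj (Fin.ext h)
      show (b : Fin m) < f j
      rw [Fin.lt_def]
      rcases hor with ⟨h4, h5⟩ | ⟨h4, h5⟩ <;> omega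
    · by_cases hj : f j = a
      · simp only [if_neg hi, if_pos hj]
        have h1 : (f i : ℕ) < (a : ℕ) := by rw [← hj]; exact hltv
        have h2 : (f i : ℕ) ≠ (b : ℕ) := fun h => hfb i (Fin.ext h)
        show f i < b
        rw [Fin.lt_def]
        rcases hor with ⟨h4, h5⟩ | ⟨h4, h5⟩ <;> omega
      · simpa only [if_neg hi, if_neg hj] using hlt
  have hg : ∀ j : Fin I.card,
      J.orderEmbOfFin hcard.symm j = if f j = a then b else f j := by
    have := Finset.orderEmbOfFin_unique hcard.symm hmem hmono
    intro j; rw [← this]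
  have hoff : ∀ x : Fin m, x ≠ a → x ≠ b → (x : ℕ) ≠ k ∧ (x : ℕ) ≠ k + 1 := by
    intro x hxa hxb
    have h1 : (x : ℕ) ≠ (a : ℕ) := fun h => hxa (Fin.ext h)
    have h2 : (x : ℕ) ≠ (b : ℕ) := fun h => hxb (Fin.ext h)
    rcases hor with ⟨h4, h5⟩ | ⟨h4, h5⟩ <;> omega
  have key : (givensRot m k θ).submatrix (⇑f) (⇑(J.orderEmbOfFin hcard.symm))
      = Matrix.diagonal (fun i => if f i = a then givensRot m k θ a b else 1) := by
    ext i j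
    rw [Matrix.submatrix_apply, hg j]
    by_cases hj : f j = a
    · by_cases hi : f i = a
      · have hij : i = j := f.injective (hi.trans hj.symm)
        subst hij
        rw [if_pos hj, Matrix.diagonal_apply_eq, if_pos hi, hi]
      · have hij : i ≠ j := fun h => hi (h ▸ hj)
        rw [if_pos hj, Matrix.diagonal_apply_ne _ hij]
        obtain ⟨h1, h2⟩ := hoff (f i) hi (hfb i)
        have h3 : f i ≠ b := hfb i
        simp only [givensRot, Matrix.of_apply]
        rw [if_neg (fun h => h1 h.1), if_neg (fun h => h1 h.1),
          if_neg (fun h => h2 h.1), if_neg (fun h => h2 h.1), if_neg h3]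
    · rw [if_neg hj]
      have h3 : f j ≠ b := hfb j
      obtain ⟨hj1, hj2⟩ := hoff (f j) hj h3
      by_cases hi : f i = a
      · have hij : i ≠ j := fun h => hj (by rw [← h, hi])
        rw [Matrix.diagonal_apply_ne _ hij]
        simp only [givensRot, Matrix.of_apply]
        rw [if_neg (fun h => hj1 h.2), if_neg (fun h => hj2 h.2),
          if_neg (fun h => hj1 h.2), if_neg (fun h => hj2 h.2),
          if_neg (show f i ≠ f j from fun h => hj (by rw [← h, hi]))]
      · obtain ⟨hi1, hi2⟩ := hoff (f i) hi (hfb i)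
        simp only [givensRot, Matrix.of_apply]
        rw [if_neg (fun h => hi1 h.1), if_neg (fun h => hi1 h.1),
          if_neg (fun h => hi2 h.1), if_neg (fun h => hi2 h.1)]
        rcases eq_or_ne i j with rfl | hij
        · rw [if_pos rfl, Matrix.diagonal_apply_eq, if_neg hi]
        · rw [if_neg (fun h => hij (f.injective h)), Matrix.diagonal_apply_ne _ hij]
  rw [key, Matrix.det_diagonal]
  rw [prod_oEF I rfl (fun x => if x = a then givensRot m k θ a b else 1)]
  rw [Finset.prod_ite_eq' I a (fun _ => givensRot m k θ a b), if_pos ha]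



lemma card_toggle {m : ℕ} (x : Fin m) (P : Finset (Fin m) → Prop) [DecidablePred P] :
    (Finset.univ.filter P).card
      = (Finset.univ.filter (fun I => P (symmDiff I {x}))).card := by
  apply Finset.card_nbij' (fun I => symmDiff I {x}) (fun I => symmDiff I {x})
  · intro I hI
    simp only [Finset.mem_coe, Finset.mem_filter, Finset.mem_univ, true_and] at *
    rwa [symmDiff_symmDiff_cancel_right]
  · intro I hI
    simp only [Finset.mem_coe, Finset.mem_filter, Finset.mem_univ, true_and] at *
    exact hI
  · intro I _
    exact symmDiff_symmDiff_cancel_right _ _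
  · intro I _
    exact symmDiff_symmDiff_cancel_right _ _

lemma mem_toggle {m : ℕ} (x y : Fin m) (I : Finset (Fin m)) :
    y ∈ symmDiff I {x} ↔ (if y = x then y ∉ I else y ∈ I) := by
  split_ifs with h
  · subst h; simp [Finset.mem_symmDiff]
  · simp [Finset.mem_symmDiff, h]

lemma card_univ_finset {m : ℕ} :
    (Finset.univ : Finset (Finset (Fin m))).card = 2 ^ m := by
  simp [Finset.card_univ, Fintype.card_finset]

lemma card_iff_filter {m : ℕ} (a b : Fin m) (hab : a ≠ b) :
    (Finset.univ.filter (fun I : Finset (Fin m) => a ∈ I ↔ b ∈ I)).card = 2 ^ (m - 1) ∧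
    (Finset.univ.filter (fun I : Finset (Fin m) => ¬(a ∈ I ↔ b ∈ I))).card = 2 ^ (m - 1) := by
  have hm : 1 ≤ m := a.pos
  have h1 := Finset.card_filter_add_card_filter_not
    (s := (Finset.univ : Finset (Finset (Fin m))))
    (p := fun I : Finset (Fin m) => a ∈ I ↔ b ∈ I)
  have h2 := card_univ_finset (m := m)
  have h3 : (Finset.univ.filter (fun I : Finset (Fin m) => a ∈ I ↔ b ∈ I)).card
      = (Finset.univ.filter (fun I : Finset (Fin m) => ¬(a ∈ I ↔ b ∈ I))).card := by
    rw [card_toggle b (fun I : Finset (Fin m) => a ∈ I ↔ b ∈ I)]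
    congr 1
    apply Finset.filter_congr
    intro I _
    rw [mem_toggle, mem_toggle]
    rw [if_neg hab, if_pos rfl]
    tauto
  have hpow : 2 ^ m = 2 ^ (m - 1) * 2 := by
    rw [← pow_succ]
    congr 1
    omega
  constructor <;> omega

lemma card_mem_notmem_filter {m : ℕ} (hm : 2 ≤ m) (a b : Fin m) (hab : a ≠ b) :
    (Finset.univ.filter (fun I : Finset (Fin m) => a ∈ I ∧ b ∉ I)).card = 2 ^ (m - 2) := by
  have e1 : (Finset.univ.filter (fun I : Finset (Fin m) => a ∈ I ∧ b ∉ I)).card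
      = (Finset.univ.filter (fun I : Finset (Fin m) => a ∈ I ∧ b ∈ I)).card := by
    rw [card_toggle b (fun I : Finset (Fin m) => a ∈ I ∧ b ∉ I)]
    congr 1
    apply Finset.filter_congr
    intro I _
    rw [mem_toggle, mem_toggle, if_neg hab, if_pos rfl]
    tauto
  have e2 : (Finset.univ.filter (fun I : Finset (Fin m) => a ∈ I ∧ b ∉ I)).card
      = (Finset.univ.filter (fun I : Finset (Fin m) => ¬a ∈ I ∧ b ∉ I)).card := by
    rw [card_toggle a (fun I : Finset (Fin m) => a ∈ I ∧ b ∉ I)]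
    congr 1
    apply Finset.filter_congr
    intro I _
    rw [mem_toggle, mem_toggle, if_pos rfl, if_neg (Ne.symm hab)]
  have e3 : (Finset.univ.filter (fun I : Finset (Fin m) => ¬a ∈ I ∧ b ∈ I)).card
      = (Finset.univ.filter (fun I : Finset (Fin m) => a ∈ I ∧ b ∈ I)).card := by
    rw [card_toggle a (fun I : Finset (Fin m) => ¬a ∈ I ∧ b ∈ I)]
    congr 1
    apply Finset.filter_congr
    intro I _
    rw [mem_toggle, mem_toggle, if_pos rfl, if_neg (Ne.symm hab)]
    tauto
  have s1 : (Finset.univ.filter (fun I : Finset (Fin m) => a ∈ I ∧ b ∈ I)).card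
      + (Finset.univ.filter (fun I : Finset (Fin m) => a ∈ I ∧ ¬b ∈ I)).card
      = (Finset.univ.filter (fun I : Finset (Fin m) => a ∈ I)).card := by
    rw [← Finset.filter_filter, ← Finset.filter_filter]
    exact Finset.card_filter_add_card_filter_not (p := fun I : Finset (Fin m) => b ∈ I)
  have s2 : (Finset.univ.filter (fun I : Finset (Fin m) => ¬a ∈ I ∧ b ∈ I)).card
      + (Finset.univ.filter (fun I : Finset (Fin m) => ¬a ∈ I ∧ ¬b ∈ I)).card
      = (Finset.univ.filter (fun I : Finset (Fin m) => ¬a ∈ I)).card := by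
    rw [← Finset.filter_filter, ← Finset.filter_filter]
    exact Finset.card_filter_add_card_filter_not (p := fun I : Finset (Fin m) => b ∈ I)
  have s3 : (Finset.univ.filter (fun I : Finset (Fin m) => a ∈ I)).card
      + (Finset.univ.filter (fun I : Finset (Fin m) => ¬a ∈ I)).card
      = 2 ^ m := by
    rw [← card_univ_finset (m := m)]
    exact Finset.card_filter_add_card_filter_not (p := fun I : Finset (Fin m) => a ∈ I)
  have hpow : 2 ^ m = 2 ^ (m - 2) * 4 := by
    have : m - 2 + 2 = m := by omega
    calc 2 ^ m = 2 ^ (m - 2 + 2) := by rw [this]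
    _ = 2 ^ (m - 2) * 4 := by rw [pow_add]; norm_num
  omega

lemma mem_iff_of_minor_ne {m : ℕ} (k : ℕ) (θ : ℝ) {a b : Fin m}
    (hav : (a : ℕ) = k) (hbv : (b : ℕ) = k + 1)
    (I J : Finset (Fin m)) (hcard : I.card = J.card)
    (hne : minor (givensRot m k θ) (I, J) ≠ 0) :
    ∀ x : Fin m, x ≠ a → x ≠ b → (x ∈ I ↔ x ∈ J) := by
  rw [minor_eq_det _ hcard] at hne
  set f := I.orderEmbOfFin rfl with hf
  set g := J.orderEmbOfFin hcard.symm with hg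
  intro x hxa hxb
  have hx1 : (x : ℕ) ≠ k := fun h => hxa (Fin.ext (by omega))
  have hx2 : (x : ℕ) ≠ k + 1 := fun h => hxb (Fin.ext (by omega))
  constructor
  · intro hxI
    by_contra hxJ
    obtain ⟨i, hi⟩ : ∃ i, f i = x := by
      have hx : x ∈ Set.range f := by rw [hf, Finset.range_orderEmbOfFin]; exact hxI
      exact hx
    refine hne (Matrix.det_eq_zero_of_row_eq_zero i fun j => ?_)
    · have hgj : g j ∈ J := J.orderEmbOfFin_mem _ j
      have hnej : x ≠ g j := fun h => hxJ (h ▸ hgj)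
      rw [Matrix.submatrix_apply, hi]
      simp only [givensRot, Matrix.of_apply]
      rw [if_neg (fun h => hx1 h.1), if_neg (fun h => hx1 h.1),
        if_neg (fun h => hx2 h.1), if_neg (fun h => hx2 h.1), if_neg hnej]
  · intro hxJ
    by_contra hxI
    obtain ⟨j, hj⟩ : ∃ j, g j = x := by
      have hx : x ∈ Set.range g := by rw [hg, Finset.range_orderEmbOfFin]; exact hxJ
      exact hx
    refine hne (Matrix.det_eq_zero_of_column_eq_zero j fun i => ?_)
    · have hfi : f i ∈ I := I.orderEmbOfFin_mem _ i
      have hnei : f i ≠ x := fun h => hxI (h ▸ hfi)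
      rw [Matrix.submatrix_apply, hj]
      simp only [givensRot, Matrix.of_apply]
      rw [if_neg (fun h => hx1 h.2), if_neg (fun h => hx2 h.2),
        if_neg (fun h => hx1 h.2), if_neg (fun h => hx2 h.2), if_neg hnei]

lemma nonzero_cases {m : ℕ} (k : ℕ) (θ : ℝ) {a b : Fin m}
    (hav : (a : ℕ) = k) (hbv : (b : ℕ) = k + 1)
    (I J : Finset (Fin m)) (hcard : I.card = J.card)
    (hne : minor (givensRot m k θ) (I, J) ≠ 0) :
    I = J ∨ (J = insert b (I.erase a) ∧ a ∈ I ∧ b ∉ I)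
      ∨ (J = insert a (I.erase b) ∧ b ∈ I ∧ a ∉ I) := by
  have hab : a ≠ b := fun h => by rw [h] at hav; omega
  have hIJ := mem_iff_of_minor_ne k θ hav hbv I J hcard hne
  clear hne
  have hext : (a ∈ I ↔ a ∈ J) → (b ∈ I ↔ b ∈ J) → I = J := by
    intro h1 h2
    ext x
    by_cases hxa : x = a
    · subst hxa; exact h1
    by_cases hxb : x = b
    · subst hxb; exact h2
    exact hIJ x hxa hxb
  have hIsubJ : (a ∈ I → a ∈ J) → (b ∈ I → b ∈ J) → I = J := by
    intro h1 h2
    apply Finset.eq_of_subset_of_card_le _ (le_of_eq hcard.symm)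
    intro x hx
    by_cases hxa : x = a
    · subst hxa; exact h1 hx
    by_cases hxb : x = b
    · subst hxb; exact h2 hx
    exact (hIJ x hxa hxb).1 hx
  have hJsubI : (a ∈ J → a ∈ I) → (b ∈ J → b ∈ I) → J = I := by
    intro h1 h2
    apply Finset.eq_of_subset_of_card_le _ (le_of_eq hcard)
    intro x hx
    by_cases hxa : x = a
    · subst hxa; exact h1 hx
    by_cases hxb : x = b
    · subst hxb; exact h2 hx
    exact (hIJ x hxa hxb).2 hx
  have hswap1 : a ∈ I → b ∉ I → b ∈ J → a ∉ J → J = insert b (I.erase a) := by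
    intro h1 h2 h3 h4
    ext x
    simp only [Finset.mem_insert, Finset.mem_erase]
    by_cases hxb : x = b
    · subst hxb
      exact ⟨fun _ => Or.inl rfl, fun _ => h3⟩
    by_cases hxa : x = a
    · subst hxa
      refine ⟨fun h => absurd h h4, ?_⟩
      rintro (h | ⟨h, -⟩)
      · exact absurd h hab
      · exact absurd rfl h
    have := hIJ x hxa hxb
    exact ⟨fun h => Or.inr ⟨hxa, this.mpr h⟩, fun h => by
      rcases h with h | ⟨-, h⟩
      · exact absurd h hxb
      · exact this.mp h⟩
  have hswap2 : b ∈ I → a ∉ I → a ∈ J → b ∉ J → J = insert a (I.erase b) := by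
    intro h1 h2 h3 h4
    ext x
    simp only [Finset.mem_insert, Finset.mem_erase]
    by_cases hxa : x = a
    · subst hxa
      exact ⟨fun _ => Or.inl rfl, fun _ => h3⟩
    by_cases hxb : x = b
    · subst hxb
      refine ⟨fun h => absurd h h4, ?_⟩
      rintro (h | ⟨h, -⟩)
      · exact absurd h hab.symm
      · exact absurd rfl h
    have := hIJ x hxa hxb
    exact ⟨fun h => Or.inr ⟨hxb, this.mpr h⟩, fun h => by
      rcases h with h | ⟨-, h⟩
      · exact absurd h hxa
      · exact this.mp h⟩
  by_cases haI : a ∈ I <;> by_cases hbI : b ∈ I <;> by_cases haJ : a ∈ J <;>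
    by_cases hbJ : b ∈ J
  · exact Or.inl (hext (iff_of_true haI haJ) (iff_of_true hbI hbJ))
  · exfalso; have h := hJsubI (fun _ => haI) (fun _ => hbI)
    rw [h] at hbJ; exact hbJ hbI
  · exfalso; have h := hJsubI (fun h' => absurd h' haJ) (fun _ => hbI)
    rw [h] at haJ; exact haJ haI
  · exfalso; have h := hJsubI (fun h' => absurd h' haJ) (fun h' => absurd h' hbJ)
    rw [h] at haJ; exact haJ haI
  · exfalso; have h := hIsubJ (fun _ => haJ) (fun h' => absurd h' hbI)
    rw [← h] at hbJ; exact hbI hbJ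
  · exact Or.inl (hext (iff_of_true haI haJ) (iff_of_false hbI hbJ))
  · exact Or.inr (Or.inl ⟨hswap1 haI hbI hbJ haJ, haI, hbI⟩)
  · exfalso; have h := hJsubI (fun h' => absurd h' haJ) (fun h' => absurd h' hbJ)
    rw [h] at haJ; exact haJ haI
  · exfalso; have h := hIsubJ (fun h' => absurd h' haI) (fun _ => hbJ)
    rw [← h] at haJ; exact haI haJ
  · exact Or.inr (Or.inr ⟨hswap2 hbI haI haJ hbJ, hbI, haI⟩)
  · exact Or.inl (hext (iff_of_false haI haJ) (iff_of_true hbI hbJ))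
  · exfalso; have h := hJsubI (fun h' => absurd h' haJ) (fun h' => absurd h' hbJ)
    rw [h] at hbJ; exact hbJ hbI
  · exfalso; have h := hIsubJ (fun h' => absurd h' haI) (fun h' => absurd h' hbI)
    rw [← h] at haJ; exact haI haJ
  · exfalso; have h := hIsubJ (fun h' => absurd h' haI) (fun h' => absurd h' hbI)
    rw [← h] at haJ; exact haI haJ
  · exfalso; have h := hIsubJ (fun h' => absurd h' haI) (fun h' => absurd h' hbI)
    rw [← h] at hbJ; exact hbI hbJ
  · exact Or.inl (hext (iff_of_false haI haJ) (iff_of_false hbI hbJ))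


lemma minor_diag' {m : ℕ} (k : ℕ) (θ : ℝ) (hk : k + 1 < m) {a b : Fin m}
    (hav : (a : ℕ) = k) (hbv : (b : ℕ) = k + 1) (I : Finset (Fin m)) :
    minor (givensRot m k θ) (I, I) =
      if a ∈ I then (if b ∈ I then 1 else Real.cos θ)
      else (if b ∈ I then Real.cos θ else 1) := by
  have ea : (⟨k, by omega⟩ : Fin m) = a := Fin.ext hav.symm
  have eb : (⟨k + 1, hk⟩ : Fin m) = b := Fin.ext hbv.symm
  rw [minor_diag k θ hk I, ea, eb]

lemma givens_ab {m : ℕ} {k : ℕ} {θ : ℝ} {a b : Fin m}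
    (hav : (a : ℕ) = k) (hbv : (b : ℕ) = k + 1) :
    givensRot m k θ a b = Real.sin θ := by
  simp only [givensRot, Matrix.of_apply]
  rw [if_neg (by rw [hbv]; omega : ¬((a : ℕ) = k ∧ (b : ℕ) = k)), if_pos ⟨hav, hbv⟩]

lemma givens_ba {m : ℕ} {k : ℕ} {θ : ℝ} {a b : Fin m}
    (hav : (a : ℕ) = k) (hbv : (b : ℕ) = k + 1) :
    givensRot m k θ b a = -Real.sin θ := by
  simp only [givensRot, Matrix.of_apply]
  rw [if_neg (by rw [hbv]; omega : ¬((b : ℕ) = k ∧ (a : ℕ) = k)),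
    if_neg (by rw [hbv]; omega : ¬((b : ℕ) = k ∧ (a : ℕ) = k + 1)),
    if_pos ⟨hbv, hav⟩]

end GivensAux

/-- for `sin θ ≠ 0` and `cos θ ≠ 0`, the planar rotation `R_k(θ)` of
`ℝ^{2n}` has at most `(3/2) ⬝ 2^{2n}` pairs `(I,J)` of equal-size subsets with
nonzero minor: exactly `2^{2n-1}` pairs give minor `1` (the pairs `I = J`
containing both or neither of `k, k+1`), `2^{2n-1}` give `cos θ` (the pairs
`I = J` containing exactly one of them), and `2^{2n-2} + 2^{2n-2}` give `± sin θ`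
(the off-diagonal pairs exchanging `k` and `k+1`). -/
theorem givens_minor_count (n : ℕ) (hn : 1 ≤ n) (k : ℕ) (hk : k + 1 < 2 * n) (θ : ℝ)
    (hsin : Real.sin θ ≠ 0) (hcos : Real.cos θ ≠ 0) :
    let a : Fin (2 * n) := ⟨k, by omega⟩
    let b : Fin (2 * n) := ⟨k + 1, hk⟩
    (2 * (Finset.univ.filter (fun p : Finset (Fin (2 * n)) × Finset (Fin (2 * n)) =>
        p.1.card = p.2.card ∧ minor (givensRot (2 * n) k θ) p ≠ 0)).card
      ≤ 3 * 2 ^ (2 * n)) ∧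
    (Finset.univ.filter (fun p : Finset (Fin (2 * n)) × Finset (Fin (2 * n)) =>
        p.1 = p.2 ∧ (a ∈ p.1 ↔ b ∈ p.1) ∧ minor (givensRot (2 * n) k θ) p = 1)).card
      = 2 ^ (2 * n - 1) ∧
    (Finset.univ.filter (fun p : Finset (Fin (2 * n)) × Finset (Fin (2 * n)) =>
        p.1 = p.2 ∧ ¬(a ∈ p.1 ↔ b ∈ p.1) ∧
          minor (givensRot (2 * n) k θ) p = Real.cos θ)).card
      = 2 ^ (2 * n - 1) ∧
    (Finset.univ.filter (fun p : Finset (Fin (2 * n)) × Finset (Fin (2 * n)) =>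
        p.2 = insert b (p.1.erase a) ∧ a ∈ p.1 ∧ b ∉ p.1 ∧
          minor (givensRot (2 * n) k θ) p = Real.sin θ)).card
      = 2 ^ (2 * n - 2) ∧
    (Finset.univ.filter (fun p : Finset (Fin (2 * n)) × Finset (Fin (2 * n)) =>
        p.2 = insert a (p.1.erase b) ∧ b ∈ p.1 ∧ a ∉ p.1 ∧
          minor (givensRot (2 * n) k θ) p = -Real.sin θ)).card
      = 2 ^ (2 * n - 2) := by
  intro a b
  have hm2 : 2 ≤ 2 * n := by omega
  have hav : (a : ℕ) = k := rfl
  have hbv : (b : ℕ) = k + 1 := rfl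
  have hab : a ≠ b := by
    intro h
    have h2 : (a : ℕ) = (b : ℕ) := congrArg Fin.val h
    rw [hav, hbv] at h2
    omega
  have hinjd : Function.Injective (fun I : Finset (Fin (2 * n)) => (I, I)) :=
    fun x y h => (Prod.ext_iff.mp h).1
  have hinj1 : Function.Injective
      (fun I : Finset (Fin (2 * n)) => (I, insert b (I.erase a))) :=
    fun x y h => (Prod.ext_iff.mp h).1
  have hinj2 : Function.Injective
      (fun I : Finset (Fin (2 * n)) => (I, insert a (I.erase b))) :=
    fun x y h => (Prod.ext_iff.mp h).1
  have hpow : 2 ^ (2 * n) = 2 ^ (2 * n - 2) * 4 := by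
    have h4 : 2 * n - 2 + 2 = 2 * n := by omega
    calc 2 ^ (2 * n) = 2 ^ (2 * n - 2 + 2) := by rw [h4]
    _ = 2 ^ (2 * n - 2) * 4 := by rw [pow_add]; norm_num
  -- the three structured families, without minor conditions
  have hS1 : (Finset.univ.filter (fun p : Finset (Fin (2 * n)) × Finset (Fin (2 * n)) =>
        p.2 = insert b (p.1.erase a) ∧ a ∈ p.1 ∧ b ∉ p.1)).card = 2 ^ (2 * n - 2) := by
    have himg : (Finset.univ.filter (fun p : Finset (Fin (2 * n)) × Finset (Fin (2 * n)) =>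
          p.2 = insert b (p.1.erase a) ∧ a ∈ p.1 ∧ b ∉ p.1))
        = (Finset.univ.filter (fun I : Finset (Fin (2 * n)) => a ∈ I ∧ b ∉ I)).image
            (fun I => (I, insert b (I.erase a))) := by
      ext p
      simp only [Finset.mem_filter, Finset.mem_univ, true_and, Finset.mem_image]
      constructor
      · rintro ⟨h2, ha, hb⟩
        exact ⟨p.1, ⟨ha, hb⟩, Prod.ext_iff.mpr ⟨rfl, h2.symm⟩⟩
      · rintro ⟨I, ⟨ha, hb⟩, rfl⟩
        exact ⟨rfl, ha, hb⟩
    rw [himg, Finset.card_image_of_injective _ hinj1]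
    exact GivensAux.card_mem_notmem_filter hm2 a b hab
  have hS2 : (Finset.univ.filter (fun p : Finset (Fin (2 * n)) × Finset (Fin (2 * n)) =>
        p.2 = insert a (p.1.erase b) ∧ b ∈ p.1 ∧ a ∉ p.1)).card = 2 ^ (2 * n - 2) := by
    have himg : (Finset.univ.filter (fun p : Finset (Fin (2 * n)) × Finset (Fin (2 * n)) =>
          p.2 = insert a (p.1.erase b) ∧ b ∈ p.1 ∧ a ∉ p.1))
        = (Finset.univ.filter (fun I : Finset (Fin (2 * n)) => b ∈ I ∧ a ∉ I)).image
            (fun I => (I, insert a (I.erase b))) := by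
      ext p
      simp only [Finset.mem_filter, Finset.mem_univ, true_and, Finset.mem_image]
      constructor
      · rintro ⟨h2, hb, ha⟩
        exact ⟨p.1, ⟨hb, ha⟩, Prod.ext_iff.mpr ⟨rfl, h2.symm⟩⟩
      · rintro ⟨I, ⟨hb, ha⟩, rfl⟩
        exact ⟨rfl, hb, ha⟩
    rw [himg, Finset.card_image_of_injective _ hinj2]
    exact GivensAux.card_mem_notmem_filter hm2 b a hab.symm
  have hD : (Finset.univ.filter (fun p : Finset (Fin (2 * n)) × Finset (Fin (2 * n)) =>
        p.1 = p.2)).card = 2 ^ (2 * n) := by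
    have himg : (Finset.univ.filter (fun p : Finset (Fin (2 * n)) × Finset (Fin (2 * n)) =>
          p.1 = p.2))
        = (Finset.univ : Finset (Finset (Fin (2 * n)))).image (fun I => (I, I)) := by
      ext p
      simp only [Finset.mem_filter, Finset.mem_univ, true_and, Finset.mem_image]
      constructor
      · intro h2
        exact ⟨p.1, Prod.ext_iff.mpr ⟨rfl, h2⟩⟩
      · rintro ⟨I, rfl⟩
        rfl
    rw [himg, Finset.card_image_of_injective _ hinjd]
    exact GivensAux.card_univ_finset
  refine ⟨?_, ?_, ?_, ?_, ?_⟩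
  -- Part 1
  · have hsub : (Finset.univ.filter (fun p : Finset (Fin (2 * n)) × Finset (Fin (2 * n)) =>
          p.1.card = p.2.card ∧ minor (givensRot (2 * n) k θ) p ≠ 0))
        ⊆ (Finset.univ.filter (fun p : Finset (Fin (2 * n)) × Finset (Fin (2 * n)) =>
            p.1 = p.2))
          ∪ (Finset.univ.filter (fun p : Finset (Fin (2 * n)) × Finset (Fin (2 * n)) =>
            p.2 = insert b (p.1.erase a) ∧ a ∈ p.1 ∧ b ∉ p.1))
          ∪ (Finset.univ.filter (fun p : Finset (Fin (2 * n)) × Finset (Fin (2 * n)) =>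
            p.2 = insert a (p.1.erase b) ∧ b ∈ p.1 ∧ a ∉ p.1)) := by
      intro p hp
      simp only [Finset.mem_filter, Finset.mem_univ, true_and] at hp
      simp only [Finset.mem_union, Finset.mem_filter, Finset.mem_univ, true_and]
      rcases GivensAux.nonzero_cases k θ hav hbv p.1 p.2 hp.1 hp.2 with h | h | h
      · exact Or.inl (Or.inl h)
      · exact Or.inl (Or.inr h)
      · exact Or.inr h
    have hle := Finset.card_le_card hsub
    have hu1 := Finset.card_union_le
      ((Finset.univ.filter (fun p : Finset (Fin (2 * n)) × Finset (Fin (2 * n)) =>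
          p.1 = p.2))
        ∪ (Finset.univ.filter (fun p : Finset (Fin (2 * n)) × Finset (Fin (2 * n)) =>
          p.2 = insert b (p.1.erase a) ∧ a ∈ p.1 ∧ b ∉ p.1)))
      (Finset.univ.filter (fun p : Finset (Fin (2 * n)) × Finset (Fin (2 * n)) =>
          p.2 = insert a (p.1.erase b) ∧ b ∈ p.1 ∧ a ∉ p.1))
    have hu2 := Finset.card_union_le
      (Finset.univ.filter (fun p : Finset (Fin (2 * n)) × Finset (Fin (2 * n)) =>
          p.1 = p.2))
      (Finset.univ.filter (fun p : Finset (Fin (2 * n)) × Finset (Fin (2 * n)) =>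
          p.2 = insert b (p.1.erase a) ∧ a ∈ p.1 ∧ b ∉ p.1))
    omega
  -- Part 2
  · have himg : (Finset.univ.filter (fun p : Finset (Fin (2 * n)) × Finset (Fin (2 * n)) =>
          p.1 = p.2 ∧ (a ∈ p.1 ↔ b ∈ p.1) ∧ minor (givensRot (2 * n) k θ) p = 1))
        = (Finset.univ.filter (fun I : Finset (Fin (2 * n)) => a ∈ I ↔ b ∈ I)).image
            (fun I => (I, I)) := by
      ext p
      simp only [Finset.mem_filter, Finset.mem_univ, true_and, Finset.mem_image]
      constructor
      · rintro ⟨h12, hiff, -⟩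
        exact ⟨p.1, hiff, Prod.ext_iff.mpr ⟨rfl, h12⟩⟩
      · rintro ⟨I, hiff, rfl⟩
        refine ⟨rfl, hiff, ?_⟩
        rw [GivensAux.minor_diag' k θ hk hav hbv I]
        by_cases haI : a ∈ I
        · rw [if_pos haI, if_pos (hiff.mp haI)]
        · rw [if_neg haI, if_neg (fun h => haI (hiff.mpr h))]
    rw [himg, Finset.card_image_of_injective _ hinjd]
    exact (GivensAux.card_iff_filter a b hab).1
  -- Part 3
  · have himg : (Finset.univ.filter (fun p : Finset (Fin (2 * n)) × Finset (Fin (2 * n)) =>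
          p.1 = p.2 ∧ ¬(a ∈ p.1 ↔ b ∈ p.1) ∧
            minor (givensRot (2 * n) k θ) p = Real.cos θ))
        = (Finset.univ.filter (fun I : Finset (Fin (2 * n)) => ¬(a ∈ I ↔ b ∈ I))).image
            (fun I => (I, I)) := by
      ext p
      simp only [Finset.mem_filter, Finset.mem_univ, true_and, Finset.mem_image]
      constructor
      · rintro ⟨h12, hiff, -⟩
        exact ⟨p.1, hiff, Prod.ext_iff.mpr ⟨rfl, h12⟩⟩
      · rintro ⟨I, hniff, rfl⟩
        refine ⟨rfl, hniff, ?_⟩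
        rw [GivensAux.minor_diag' k θ hk hav hbv I]
        by_cases haI : a ∈ I
        · have hbI : b ∉ I := fun h => hniff (iff_of_true haI h)
          rw [if_pos haI, if_neg hbI]
        · have hbI : b ∈ I := by
            by_contra h
            exact hniff (iff_of_false haI h)
          rw [if_neg haI, if_pos hbI]
    rw [himg, Finset.card_image_of_injective _ hinjd]
    exact (GivensAux.card_iff_filter a b hab).2
  -- Part 4
  · have himg : (Finset.univ.filter (fun p : Finset (Fin (2 * n)) × Finset (Fin (2 * n)) =>
          p.2 = insert b (p.1.erase a) ∧ a ∈ p.1 ∧ b ∉ p.1 ∧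
            minor (givensRot (2 * n) k θ) p = Real.sin θ))
        = (Finset.univ.filter (fun I : Finset (Fin (2 * n)) => a ∈ I ∧ b ∉ I)).image
            (fun I => (I, insert b (I.erase a))) := by
      ext p
      simp only [Finset.mem_filter, Finset.mem_univ, true_and, Finset.mem_image]
      constructor
      · rintro ⟨h2, ha, hb, -⟩
        exact ⟨p.1, ⟨ha, hb⟩, Prod.ext_iff.mpr ⟨rfl, h2.symm⟩⟩
      · rintro ⟨I, ⟨ha, hb⟩, rfl⟩
        refine ⟨rfl, ha, hb, ?_⟩
        rw [GivensAux.minor_swap k θ hk hab (Or.inl ⟨hav, hbv⟩) I ha hb, GivensAux.givens_ab hav hbv]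
    rw [himg, Finset.card_image_of_injective _ hinj1]
    exact GivensAux.card_mem_notmem_filter hm2 a b hab
  -- Part 5
  · have himg : (Finset.univ.filter (fun p : Finset (Fin (2 * n)) × Finset (Fin (2 * n)) =>
          p.2 = insert a (p.1.erase b) ∧ b ∈ p.1 ∧ a ∉ p.1 ∧
            minor (givensRot (2 * n) k θ) p = -Real.sin θ))
        = (Finset.univ.filter (fun I : Finset (Fin (2 * n)) => b ∈ I ∧ a ∉ I)).image
            (fun I => (I, insert a (I.erase b))) := by
      ext p
      simp only [Finset.mem_filter, Finset.mem_univ, true_and, Finset.mem_image]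
      constructor
      · rintro ⟨h2, hb, ha, -⟩
        exact ⟨p.1, ⟨hb, ha⟩, Prod.ext_iff.mpr ⟨rfl, h2.symm⟩⟩
      · rintro ⟨I, ⟨hb, ha⟩, rfl⟩
        refine ⟨rfl, hb, ha, ?_⟩
        rw [GivensAux.minor_swap k θ hk hab.symm (Or.inr ⟨hbv, hav⟩) I hb ha, GivensAux.givens_ba hav hbv]
    rw [himg, Finset.card_image_of_injective _ hinj2]
    exact GivensAux.card_mem_notmem_filter hm2 b a hab.symm
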